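/- Let p be an odd prime, 𝒬 a quadratic form on 𝔽_p^n given by 𝒬[x] = xᵀMx for a symmetric matrix M over 𝔽_p, and ℒ a linear form on 𝔽_p^n. Let V = ker(M) be the radical of 𝒬 and r the rank of M. Then the Gauss sum G_p(𝒬, ℒ) = Σ_{t ∈ 𝔽_p^n} e_p(𝒬[t] + ℒ(t)) vanishes unless ℒ restricted to V is zero, in which case |G_p(𝒬, ℒ)| = p^{n - r/2}. -/

import Mathlib

open Complex

/-- `e_p(z) = e^{2πi z̃ /p}` for `z : ZMod p`. -/
noncomputable def ePZMod (p : ℕ) (z : ZMod p) : ℂ :=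
  Complex.exp (2 * Real.pi * Complex.I * (z.val : ℂ) / p)

section lemmas
variable {p : ℕ} [NeZero p]

lemma pp_ne : (p : ℂ) ≠ 0 := Nat.cast_ne_zero.2 (NeZero.ne p)

omit [NeZero p] in
lemma eP_pow (z : ZMod p) : ePZMod p z = Complex.exp (2 * Real.pi * Complex.I / p) ^ (z.val) := by
  rw [← Complex.exp_nat_mul, ePZMod]
  ring_nf

lemma zeta_pow_p : Complex.exp (2 * Real.pi * Complex.I / p) ^ p = 1 := by
  rw [← Complex.exp_nat_mul]
  have h : (p : ℂ) * (2 * Real.pi * Complex.I / p) = 2 * Real.pi * Complex.I := by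
    field_simp [pp_ne (p := p)]
  rw [h, Complex.exp_two_pi_mul_I]

lemma zeta_pow_mod (m : ℕ) : Complex.exp (2 * Real.pi * Complex.I / p) ^ (m % p) =
    Complex.exp (2 * Real.pi * Complex.I / p) ^ m := by
  conv_rhs => rw [← Nat.div_add_mod m p]
  rw [pow_add, pow_mul, zeta_pow_p, one_pow, one_mul]

lemma eP_add (a b : ZMod p) : ePZMod p (a + b) = ePZMod p a * ePZMod p b := by
  rw [eP_pow, eP_pow, eP_pow, ← pow_add, ZMod.val_add, zeta_pow_mod]

omit [NeZero p] in
lemma eP_zero : ePZMod p 0 = 1 := by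
  simp [ePZMod]

lemma eP_ne_one {z : ZMod p} (hz : z ≠ 0) : ePZMod p z ≠ 1 := by
  intro h
  rw [ePZMod, Complex.exp_eq_one_iff] at h
  obtain ⟨k, hk⟩ := h
  have h2 : (2 * Real.pi * Complex.I) ≠ 0 := by
    simp [Real.pi_ne_zero, Complex.I_ne_zero]
  rw [div_eq_iff (pp_ne (p := p))] at hk
  have hval : ((z.val : ℕ) : ℂ) = (k : ℂ) * (p : ℂ) :=
    mul_left_cancel₀ h2 (by linear_combination hk)
  have hval' : (z.val : ℤ) = k * p := by exact_mod_cast hval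
  have hdvd : (p : ℤ) ∣ (z.val : ℤ) := ⟨k, by linarith⟩
  have hd : (p : ℕ) ∣ z.val := Int.ofNat_dvd.mp (by simpa using hdvd)
  have h0 := Nat.eq_zero_of_dvd_of_lt hd (ZMod.val_lt z)
  exact hz (by rw [← ZMod.val_eq_zero]; omega)

omit [NeZero p] in
lemma eP_abs (z : ZMod p) : ‖ePZMod p z‖ = 1 := by
  rw [ePZMod]
  rw [show 2 * Real.pi * Complex.I * (z.val : ℂ) / p
      = ((2 * Real.pi * z.val / p : ℝ) : ℂ) * Complex.I by push_cast; ring]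
  exact Complex.norm_exp_ofReal_mul_I _

lemma eP_conj (z : ZMod p) : (starRingEnd ℂ) (ePZMod p z) = ePZMod p (-z) := by
  have h1 : ePZMod p z * ePZMod p (-z) = 1 := by
    rw [← eP_add]; simp [eP_zero]
  have h2 : ‖ePZMod p z‖ = 1 := eP_abs z
  have h3 : (starRingEnd ℂ) (ePZMod p z) * ePZMod p z = 1 := by
    rw [mul_comm, Complex.mul_conj]
    norm_cast
    rw [← Complex.sq_norm, h2]; norm_num
  have hne : ePZMod p z ≠ 0 := by
    intro h; rw [h] at h2; simp at h2
  rw [← h1] at h3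
  exact mul_right_cancel₀ hne (h3.trans (mul_comm _ _))

lemma sum_eP_vanish {V : Type*} [AddCommGroup V] [Fintype V] (f : V →+ ZMod p)
    (hf : ∃ v, f v ≠ 0) : ∑ x : V, ePZMod p (f x) = 0 := by
  obtain ⟨v, hv⟩ := hf
  have key : ∑ x : V, ePZMod p (f x) = ePZMod p (f v) * ∑ x : V, ePZMod p (f x) := by
    rw [Finset.mul_sum]
    refine Fintype.sum_equiv (Equiv.subRight v) _ _ fun x => ?_
    simp only [Equiv.subRight_apply, map_sub, ← eP_add]
    congr 1
    ring
  have h0 : (1 - ePZMod p (f v)) * ∑ x : V, ePZMod p (f x) = 0 := by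
    rw [sub_mul, one_mul]; linear_combination key
  rcases mul_eq_zero.1 h0 with h | h
  · exact absurd (by linear_combination -h : ePZMod p (f v) = 1) (eP_ne_one hv)
  · exact h

lemma sum_eP_dot (n : ℕ) (w : Fin n → ZMod p) :
    ∑ u : Fin n → ZMod p, ePZMod p (dotProduct u w) =
      if w = 0 then (p : ℂ) ^ n else 0 := by
  split_ifs with hw
  · subst hw
    simp [dotProduct, eP_zero, Finset.card_univ, ZMod.card]
  · refine sum_eP_vanish ⟨⟨fun u => dotProduct u w, ?_⟩, ?_⟩ ?_
    · simp [dotProduct]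
    · intro a b; simp [add_dotProduct]
    · obtain ⟨i, hi⟩ := Function.ne_iff.1 hw
      exact ⟨Pi.single i 1, by simpa [single_dotProduct] using hi⟩

end lemmas

section main
variable {p n : ℕ} [Fact p.Prime]

lemma gauss_key (hodd : p ≠ 2) (M : Matrix (Fin n) (Fin n) (ZMod p)) (hM : M.IsSymm)
    (L : (Fin n → ZMod p) →ₗ[ZMod p] ZMod p) :
    (∑ t : Fin n → ZMod p, ePZMod p (dotProduct t (M.mulVec t) + L t)) *
      (starRingEnd ℂ) (∑ t : Fin n → ZMod p, ePZMod p (dotProduct t (M.mulVec t) + L t))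
    = (p : ℂ) ^ n *
        ∑ h : Fin n → ZMod p, (if M.mulVec h = 0 then ePZMod p (L h) else 0) := by
  have htwo : (2 : ZMod p) ≠ 0 := by
    have : ((2 : ℕ) : ZMod p) ≠ 0 := by
      rw [Ne, ZMod.natCast_eq_zero_iff]
      intro hdvd
      exact hodd ((Nat.prime_dvd_prime_iff_eq (Fact.out) Nat.prime_two).1 hdvd)
    simpa using this
  have hsymm : ∀ a b : Fin n → ZMod p,
      dotProduct a (M.mulVec b) = dotProduct b (M.mulVec a) := by
    intro a b
    rw [Matrix.dotProduct_mulVec, ← Matrix.mulVec_transpose, hM.eq, dotProduct_comm]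
  rw [map_sum, Finset.sum_mul_sum]
  have step1 : ∀ u t : Fin n → ZMod p,
      ePZMod p (dotProduct t (M.mulVec t) + L t) *
        (starRingEnd ℂ) (ePZMod p (dotProduct u (M.mulVec u) + L u))
      = ePZMod p ((dotProduct t (M.mulVec t) + L t)
          - (dotProduct u (M.mulVec u) + L u)) := by
    intro u t
    rw [eP_conj, ← eP_add, sub_eq_add_neg]
  -- swap, reindex t = u + h
  rw [Finset.sum_comm]
  have step2 : ∀ u : Fin n → ZMod p,
      ∑ t : Fin n → ZMod p,
        ePZMod p (dotProduct t (M.mulVec t) + L t) *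
          (starRingEnd ℂ) (ePZMod p (dotProduct u (M.mulVec u) + L u))
      = ∑ h : Fin n → ZMod p,
          ePZMod p (dotProduct h (M.mulVec h) + L h) *
            ePZMod p (dotProduct u (M.mulVec h + M.mulVec h)) := by
    intro u
    refine Fintype.sum_equiv (Equiv.subRight u) _ _ fun t => ?_
    rw [step1, Equiv.subRight_apply, ← eP_add]
    congr 1
    have expand : dotProduct t (M.mulVec t)
        = dotProduct (u + (t - u)) (M.mulVec (u + (t - u))) := by
      congr 1 <;> rw [add_sub_cancel]
    rw [expand, Matrix.mulVec_add, dotProduct_add, add_dotProduct,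
      add_dotProduct, hsymm (t - u) u]
    have hL : L t = L u + L (t - u) := by
      rw [← map_add]; congr 1; ring
    rw [hL]
    simp only [dotProduct_add]
    ring
  rw [Finset.sum_congr rfl fun u _ => step2 u, Finset.sum_comm]
  rw [Finset.mul_sum]
  refine Finset.sum_congr rfl fun h _ => ?_
  rw [← Finset.mul_sum, sum_eP_dot]
  have hcond : (M.mulVec h + M.mulVec h = 0) ↔ M.mulVec h = 0 := by
    constructor
    · intro h0; funext i
      have h1 := congrFun h0 i
      have h2 : (2 : ZMod p) * M.mulVec h i = 0 := by
        rw [two_mul]; exact h1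
      simpa using (mul_eq_zero.1 h2).resolve_left htwo
    · intro h0; rw [h0, add_zero]
  by_cases hk : M.mulVec h = 0
  · rw [if_pos (hcond.2 hk), if_pos hk, hk, dotProduct_zero, zero_add, mul_comm]
  · rw [if_neg (fun hc => hk (hcond.1 hc)), if_neg hk, mul_zero, mul_zero]

end main

/-- Vanishing/absolute value of the multivariable quadratic Gauss sum
`G_p(𝒬,ℒ) = Σ_{t ∈ 𝔽_p^n} e_p(𝒬[t] + ℒ t)` where `𝒬[t] = tᵀMt` for a symmetric
matrix `M` of rank `r` with radical `V = ker M`: the sum vanishes unless `ℒ|_V = 0`,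
in which case it has absolute value `p^{n - r/2}`. -/
theorem quadratic_gauss_sum_bound (p n : ℕ) [Fact p.Prime] (hodd : p ≠ 2)
    (M : Matrix (Fin n) (Fin n) (ZMod p)) (hM : M.IsSymm)
    (L : (Fin n → ZMod p) →ₗ[ZMod p] ZMod p) :
    (¬ (∀ v, M.mulVec v = 0 → L v = 0) →
      ∑ t : Fin n → ZMod p, ePZMod p (dotProduct t (M.mulVec t) + L t) = 0) ∧
    ((∀ v, M.mulVec v = 0 → L v = 0) →
      ‖∑ t : Fin n → ZMod p, ePZMod p (dotProduct t (M.mulVec t) + L t)‖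
        = (p : ℝ) ^ ((n : ℝ) - (M.rank : ℝ) / 2)) := by
  classical
  set K := LinearMap.ker M.mulVecLin with hK
  have hmem : ∀ v, v ∈ K ↔ M.mulVec v = 0 := fun v => by
    simp [hK, LinearMap.mem_ker, Matrix.mulVecLin_apply]
  have hsum : (∑ h : Fin n → ZMod p, if M.mulVec h = 0 then ePZMod p (L h) else 0)
      = ∑ x : K, ePZMod p (L x) := by
    rw [← Finset.sum_filter]
    exact Finset.sum_subtype _ (fun x => by simp [hmem]) _
  have key := gauss_key hodd M hM L
  rw [hsum] at key
  constructor
  · intro hL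
    push_neg at hL
    obtain ⟨v, hv1, hv2⟩ := hL
    have hz : ∑ x : K, ePZMod p (L x) = 0 := by
      exact sum_eP_vanish ((L.comp K.subtype).toAddMonoidHom) ⟨⟨v, (hmem v).2 hv1⟩, hv2⟩
    rw [hz, mul_zero, Complex.mul_conj] at key
    exact Complex.normSq_eq_zero.1 (by exact_mod_cast key)
  · intro hL
    have hT : ∑ x : K, ePZMod p (L x) = (Fintype.card K : ℂ) := by
      rw [Finset.sum_congr rfl fun x _ => by
        rw [hL x ((hmem x).1 x.2), eP_zero]]
      simp [Finset.card_univ]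
    have hrank : M.rank + Module.finrank (ZMod p) K = n := by
      have h1 := LinearMap.finrank_range_add_finrank_ker M.mulVecLin
      rw [Module.finrank_pi, Fintype.card_fin] at h1
      exact h1
    have hcard : Fintype.card K = p ^ (n - M.rank) := by
      rw [Module.card_eq_pow_finrank (K := ZMod p) (V := K), ZMod.card]
      congr 1
      omega
    rw [hT, hcard, Complex.mul_conj] at key
    have hre : Complex.normSq
        (∑ t : Fin n → ZMod p, ePZMod p (dotProduct t (M.mulVec t) + L t))
        = (p : ℝ) ^ n * (p : ℝ) ^ (n - M.rank) := by exact_mod_cast key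
    have hr : M.rank ≤ n := M.rank_le_card_width.trans (by simp)
    have hp0 : (0 : ℝ) < p := by
      exact_mod_cast (Fact.out (p := p.Prime)).pos
    rw [Complex.norm_def, hre, ← Real.rpow_natCast (p : ℝ) n,
      ← Real.rpow_natCast (p : ℝ) (n - M.rank), ← Real.rpow_add hp0,
      Real.sqrt_eq_rpow, ← Real.rpow_mul hp0.le]
    congr 1
    have : ((n - M.rank : ℕ) : ℝ) = (n : ℝ) - (M.rank : ℝ) := by
      push_cast [hr]
      ring
    rw [this]
    ring
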